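/- (Finite-union maximal inequality for Rademacher averages.) Let m ≥ 1, let σ₁, …, σ_m be independent random variables each uniform on {−1, +1}, let x₁, …, x_m be fixed points of a set 𝒳, let λ ≥ 0, and let F₁, …, F_M (M ≥ 1) be nonempty finite sets of functions h : 𝒳 → ℝ such that |h(x_i)| ≤ λ for every h ∈ F₁ ∪ ⋯ ∪ F_M and every i ≤ m. Then E[max_{1 ≤ ℓ ≤ M} max_{h ∈ F_ℓ} (1/m)·Σ_{i=1}^{m} σ_i·h(x_i)] ≤ max_{1 ≤ ℓ ≤ M} E[max_{h ∈ F_ℓ} (1/m)·Σ_{i=1}^{m} σ_i·h(x_i)] + λ·√(2·log M / m). -/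

import Mathlib

open MeasureTheory ProbabilityTheory Real Finset


lemma sum_exp_mcdiarmid (n : ℕ) (c t : ℝ) (hc : 0 ≤ c) (ht : 0 ≤ t) :
    ∀ f : (Fin n → Bool) → ℝ,
      (∀ ε i, |f ε - f (Function.update ε i (!ε i))| ≤ c) →
      ∑ ε : Fin n → Bool, exp (t * f ε)
        ≤ 2 ^ n * exp (t * ((2 ^ n : ℝ)⁻¹ * ∑ ε : Fin n → Bool, f ε) + t ^ 2 * c ^ 2 * n / 8) := by
  induction n with
  | zero =>
    intro f hf
    simp [Fintype.sum_unique]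
  | succ n ih =>
    intro f hf
    set g : (Fin n → Bool) → ℝ :=
      fun ε => (f (Fin.cons true ε) + f (Fin.cons false ε)) / 2 with hg
    have hsum : ∀ F : (Fin (n+1) → Bool) → ℝ,
        ∑ ε : Fin (n+1) → Bool, F ε
          = ∑ ε : Fin n → Bool, (F (Fin.cons true ε) + F (Fin.cons false ε)) := by
      intro F
      calc ∑ ε : Fin (n+1) → Bool, F ε
          = ∑ p : Bool × (Fin n → Bool), F (Fin.consEquiv (fun _ => Bool) p) :=
            ((Fin.consEquiv (fun _ => Bool)).sum_comp F).symm
        _ = ∑ b : Bool, ∑ ε : Fin n → Bool, F (Fin.cons b ε) := by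
            rw [Fintype.sum_prod_type]; rfl
        _ = _ := by rw [Fintype.sum_bool]; exact (Finset.sum_add_distrib).symm
    -- pointwise step
    have key : ∀ ε : Fin n → Bool,
        exp (t * f (Fin.cons true ε)) + exp (t * f (Fin.cons false ε))
          ≤ 2 * exp (t ^ 2 * c ^ 2 / 8) * exp (t * g ε) := by
      intro ε
      set r : ℝ := (f (Fin.cons true ε) - f (Fin.cons false ε)) / 2 with hr
      have h1 : f (Fin.cons true ε) = g ε + r := by rw [hg, hr]; ring
      have h2 : f (Fin.cons false ε) = g ε - r := by rw [hg, hr]; ring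
      have hrc : |r| ≤ c / 2 := by
        have h := hf (Fin.cons true ε) 0
        rw [Fin.cons_zero, Fin.update_cons_zero] at h
        rw [hr, abs_div, abs_two]
        simp only [Bool.not_true] at h
        linarith
      have hcosh : cosh (t * r) ≤ exp (t ^ 2 * c ^ 2 / 8) := by
        refine (Real.cosh_le_exp_half_sq (t * r)).trans (Real.exp_le_exp.2 ?_)
        have h2 : r ^ 2 ≤ (c / 2) ^ 2 := by
          rw [← sq_abs r]
          exact pow_le_pow_left₀ (abs_nonneg r) hrc 2
        nlinarith
      have heq : exp (t * f (Fin.cons true ε)) + exp (t * f (Fin.cons false ε))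
          = 2 * cosh (t * r) * exp (t * g ε) := by
        rw [h1, h2, Real.cosh_eq, mul_add, mul_sub, Real.exp_add, Real.exp_sub,
          Real.exp_neg]
        field_simp
      rw [heq]
      have := Real.exp_pos (t * g ε)
      nlinarith [Real.cosh_pos (t * r)]
    -- bounded differences for g
    have hgf : ∀ ε i, |g ε - g (Function.update ε i (!ε i))| ≤ c := by
      intro ε i
      have e1 := hf (Fin.cons true ε) i.succ
      have e2 := hf (Fin.cons false ε) i.succ
      rw [Fin.cons_succ, ← Fin.cons_update] at e1 e2
      rw [hg, abs_le]; rw [abs_le] at e1 e2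
      obtain ⟨a1, b1⟩ := e1; obtain ⟨a2, b2⟩ := e2
      constructor <;> simp only <;> [skip; skip] <;> linarith
    have hSg : ∑ ε : Fin (n+1) → Bool, f ε = 2 * ∑ ε : Fin n → Bool, g ε := by
      rw [hsum f, hg, Finset.mul_sum]
      exact Finset.sum_congr rfl fun ε _ => by ring
    calc ∑ ε : Fin (n+1) → Bool, exp (t * f ε)
        = ∑ ε : Fin n → Bool,
            (exp (t * f (Fin.cons true ε)) + exp (t * f (Fin.cons false ε))) :=
          hsum _
      _ ≤ ∑ ε : Fin n → Bool, 2 * exp (t ^ 2 * c ^ 2 / 8) * exp (t * g ε) :=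
          Finset.sum_le_sum fun ε _ => key ε
      _ = 2 * exp (t ^ 2 * c ^ 2 / 8) * ∑ ε : Fin n → Bool, exp (t * g ε) := by
          rw [Finset.mul_sum]
      _ ≤ 2 * exp (t ^ 2 * c ^ 2 / 8) *
            (2 ^ n * exp (t * ((2 ^ n : ℝ)⁻¹ * ∑ ε : Fin n → Bool, g ε)
              + t ^ 2 * c ^ 2 * n / 8)) :=
          mul_le_mul_of_nonneg_left (ih g hgf) (by positivity)
      _ = 2 ^ (n+1) * exp (t * ((2 ^ (n+1) : ℝ)⁻¹ * ∑ ε : Fin (n+1) → Bool, f ε)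
            + t ^ 2 * c ^ 2 * (n+1 : ℕ) / 8) := by
          rw [hSg]
          have h2 : ((2:ℝ) ^ (n+1))⁻¹ * (2 * ∑ ε : Fin n → Bool, g ε)
              = (2 ^ n : ℝ)⁻¹ * ∑ ε : Fin n → Bool, g ε := by
            rw [pow_succ]
            have : (0:ℝ) < 2 ^ n := by positivity
            field_simp
          rw [h2]
          have h3 : rexp (t * ((2 ^ n : ℝ)⁻¹ * ∑ ε : Fin n → Bool, g ε)
                + t ^ 2 * c ^ 2 * ((n:ℝ)+1) / 8)
              = rexp (t ^ 2 * c ^ 2 / 8) * rexp (t * ((2 ^ n : ℝ)⁻¹ * ∑ ε : Fin n → Bool, g ε)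
                + t ^ 2 * c ^ 2 * n / 8) := by
            rw [← Real.exp_add]; congr 1; ring
          push_cast
          rw [h3, pow_succ]
          ring


lemma integral_rademacher_eq_avg {Ω : Type*} [MeasurableSpace Ω]
    (μ : Measure Ω) [IsProbabilityMeasure μ]
    (m : ℕ) (σ : Fin m → Ω → ℝ)
    (hσmeas : ∀ i, Measurable (σ i))
    (hσindep : iIndepFun σ μ)
    (hσunif : ∀ i, Measure.map (σ i) μ
      = (2⁻¹ : ENNReal) • Measure.dirac (1 : ℝ) + (2⁻¹ : ENNReal) • Measure.dirac (-1 : ℝ))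
    (g : (Fin m → ℝ) → ℝ) :
    ∫ ω, g (fun i => σ i ω) ∂μ
      = (2 ^ m : ℝ)⁻¹ * ∑ ε : Fin m → Bool, g (fun i => if ε i then 1 else -1) := by
  classical
  set χ : Bool → ℝ := fun b => if b then 1 else -1 with hχ
  have hχt : χ true = 1 := rfl
  have hχf : χ false = -1 := rfl
  set B : (Fin m → Bool) → Set Ω := fun ε => ⋂ i, σ i ⁻¹' {χ (ε i)} with hB
  have hBmeas : ∀ ε, MeasurableSet (B ε) := fun ε =>
    MeasurableSet.iInter fun i => hσmeas i (measurableSet_singleton _)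
  -- measure of each singleton preimage
  have hhalf : ∀ (i : Fin m) (c : ℝ), c = 1 ∨ c = -1 → μ (σ i ⁻¹' {c}) = 2⁻¹ := by
    intro i c hc
    rw [← Measure.map_apply (hσmeas i) (measurableSet_singleton c), hσunif i]
    rw [Measure.add_apply, Measure.smul_apply, Measure.smul_apply,
      Measure.dirac_apply' _ (measurableSet_singleton c),
      Measure.dirac_apply' _ (measurableSet_singleton c)]
    rcases hc with rfl | rfl
    · rw [Set.indicator_of_mem (by simp) (1 : ℝ → ENNReal),
        Set.indicator_of_notMem (by norm_num : (-1:ℝ) ∉ ({1} : Set ℝ))]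
      simp
    · rw [Set.indicator_of_notMem (by norm_num : (1:ℝ) ∉ ({-1} : Set ℝ)),
        Set.indicator_of_mem (by simp) (1 : ℝ → ENNReal)]
      simp
  -- measure of each cube cell
  have hBμ : ∀ ε, μ (B ε) = (2 : ENNReal)⁻¹ ^ m := by
    intro ε
    have h := hσindep.measure_inter_preimage_eq_mul (S := Finset.univ)
      (sets := fun i => {χ (ε i)}) (fun i _ => measurableSet_singleton _)
    have h' : μ (B ε) = ∏ i : Fin m, μ (σ i ⁻¹' {χ (ε i)}) := by
      rw [hB]; simpa using h
    rw [h', Finset.prod_congr rfl (fun i _ => hhalf i (χ (ε i))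
      (by cases hb : ε i <;> simp [hχ]))]
    simp
  -- a.e. the sigmas take values ±1
  have h_ae : ∀ᵐ ω ∂μ, ∀ i, σ i ω = 1 ∨ σ i ω = -1 := by
    rw [MeasureTheory.ae_all_iff]
    intro i
    have hS : MeasurableSet ({1, -1} : Set ℝ)ᶜ :=
      ((measurableSet_singleton (1:ℝ)).union (measurableSet_singleton (-1:ℝ))).compl
    have h0 : μ (σ i ⁻¹' ({1, -1} : Set ℝ)ᶜ) = 0 := by
      rw [← Measure.map_apply (hσmeas i) hS, hσunif i]
      rw [Measure.add_apply, Measure.smul_apply, Measure.smul_apply,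
        Measure.dirac_apply' _ hS, Measure.dirac_apply' _ hS,
        Set.indicator_of_notMem (by simp : (1:ℝ) ∉ ({1, -1} : Set ℝ)ᶜ),
        Set.indicator_of_notMem (by simp : (-1:ℝ) ∉ ({1, -1} : Set ℝ)ᶜ)]
      simp
    have hset : {ω | ¬(σ i ω = 1 ∨ σ i ω = -1)} = σ i ⁻¹' ({1, -1} : Set ℝ)ᶜ := by
      ext ω
      simp [not_or]
    rw [MeasureTheory.ae_iff, hset]
    exact h0
  -- pointwise identity on the good set
  have h_pt : ∀ᵐ ω ∂μ, g (fun i => σ i ω)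
      = ∑ ε : Fin m → Bool, Set.indicator (B ε) (fun _ => g (fun i => χ (ε i))) ω := by
    filter_upwards [h_ae] with ω hω
    set ε₀ : Fin m → Bool := fun i => decide (σ i ω = 1) with hε₀
    have hval : ∀ i, χ (ε₀ i) = σ i ω := by
      intro i
      rcases hω i with h | h
      · simp [hε₀, hχ, h]
      · have hne : ¬ (σ i ω = 1) := by rw [h]; norm_num
        have hd : ε₀ i = false := by simp only [hε₀]; exact decide_eq_false hne
        rw [hd, hχf, h]
    have hmem : ω ∈ B ε₀ := by
      rw [hB]
      simp only [Set.mem_iInter, Set.mem_preimage, Set.mem_singleton_iff]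
      intro i
      exact (hval i).symm
    rw [Fintype.sum_eq_single ε₀]
    · rw [Set.indicator_of_mem hmem]
      congr 1
      funext i
      exact (hval i).symm
    · intro η hη
      apply Set.indicator_of_notMem
      rw [hB]
      simp only [Set.mem_iInter, Set.mem_preimage, Set.mem_singleton_iff]
      intro hall
      apply hη
      funext i
      have h1 : χ (η i) = χ (ε₀ i) := by rw [← hall i, hval i]
      cases hb : η i <;> cases hc : ε₀ i <;> rw [hb, hc] at h1 <;>
        first
          | rfl
          | (exfalso; rw [hχt, hχf] at h1; norm_num at h1)
  -- integrate
  rw [integral_congr_ae h_pt, integral_finset_sum]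
  · have hint : ∀ ε : Fin m → Bool,
        ∫ ω, Set.indicator (B ε) (fun _ => g (fun i => χ (ε i))) ω ∂μ
          = (2 ^ m : ℝ)⁻¹ * g (fun i => χ (ε i)) := by
      intro ε
      rw [integral_indicator_const _ (hBmeas ε), measureReal_def, hBμ ε, smul_eq_mul]
      congr 1
      rw [ENNReal.toReal_pow, ← inv_pow]
      norm_num
    simp_rw [hint, ← Finset.mul_sum]
    rfl
  · intro ε _
    exact (integrable_const _).indicator (hBmeas ε)


lemma abs_sup'_sub_sup'_le {α : Type*} (s : Finset α) (H : s.Nonempty) (f g : α → ℝ)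
    (c : ℝ) (h : ∀ a ∈ s, |f a - g a| ≤ c) :
    |s.sup' H f - s.sup' H g| ≤ c := by
  rw [abs_le]
  constructor
  · have hgf : s.sup' H g ≤ s.sup' H f + c := by
      refine Finset.sup'_le _ _ fun a ha => ?_
      have h1 := (abs_le.mp (h a ha)).1
      have h2 := Finset.le_sup' f ha
      linarith
    linarith
  · have hfg : s.sup' H f ≤ s.sup' H g + c := by
      refine Finset.sup'_le _ _ fun a ha => ?_
      have h1 := (abs_le.mp (h a ha)).2
      have h2 := Finset.le_sup' g ha
      linarith
    linarith

lemma finite_maximal (m M : ℕ) (hm : 1 ≤ m) (hM : 1 ≤ M) (lam : ℝ) (hlam : 0 < lam)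
    (Z : Fin M → (Fin m → Bool) → ℝ)
    (hbd : ∀ l ε i, |Z l ε - Z l (Function.update ε i (!ε i))| ≤ 2 * lam / m) :
    (2 ^ m : ℝ)⁻¹ * ∑ ε : Fin m → Bool,
        (Finset.univ.sup' ⟨⟨0, hM⟩, Finset.mem_univ _⟩ fun l : Fin M => Z l ε)
      ≤ (Finset.univ.sup' ⟨⟨0, hM⟩, Finset.mem_univ _⟩ fun l : Fin M =>
          (2 ^ m : ℝ)⁻¹ * ∑ ε : Fin m → Bool, Z l ε)
        + lam * Real.sqrt (2 * Real.log M / m) := by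
  classical
  have hm' : (0:ℝ) < m := by exact_mod_cast hm
  have hM' : (0:ℝ) < M := by exact_mod_cast hM
  set ne : (Finset.univ : Finset (Fin M)).Nonempty := ⟨⟨0, hM⟩, Finset.mem_univ _⟩
  set c : ℝ := 2 * lam / m with hc
  have hc0 : 0 ≤ c := by positivity
  set W : (Fin m → Bool) → ℝ := fun ε => Finset.univ.sup' ne fun l => Z l ε with hW
  set AW : ℝ := (2 ^ m : ℝ)⁻¹ * ∑ ε : Fin m → Bool, W ε with hAW
  set ME : ℝ := Finset.univ.sup' ne fun l : Fin M =>
      (2 ^ m : ℝ)⁻¹ * ∑ ε : Fin m → Bool, Z l ε with hME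
  have hcard : (Fintype.card (Fin m → Bool) : ℝ) = 2 ^ m := by
    simp [Fintype.card_fun]
  have h2m : (0:ℝ) < 2 ^ m := by positivity
  -- key bound for every t > 0
  have key : ∀ t : ℝ, 0 < t → AW ≤ ME + Real.log M / t + t * lam ^ 2 / (2 * m) := by
    intro t ht
    -- Jensen
    have jensen : exp (t * AW) ≤ (2 ^ m : ℝ)⁻¹ * ∑ ε : Fin m → Bool, exp (t * W ε) := by
      have h := convexOn_exp.map_sum_le (t := (Finset.univ : Finset (Fin m → Bool)))
        (w := fun _ => (2 ^ m : ℝ)⁻¹) (p := fun ε => t * W ε)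
        (fun _ _ => by positivity)
        (by rw [Finset.sum_const, Finset.card_univ, nsmul_eq_mul, hcard]
            field_simp)
        (fun _ _ => Set.mem_univ _)
      have he : ∑ ε : Fin m → Bool, (2 ^ m : ℝ)⁻¹ • (t * W ε) = t * AW := by
        rw [hAW]
        simp_rw [smul_eq_mul]
        rw [← Finset.mul_sum, ← Finset.mul_sum]
        ring
      rw [he] at h
      refine h.trans (le_of_eq ?_)
      simp [smul_eq_mul, Finset.mul_sum]
    -- pointwise: exp (t * W ε) ≤ ∑ l, exp (t * Z l ε)
    have hpt : ∀ ε, exp (t * W ε) ≤ ∑ l : Fin M, exp (t * Z l ε) := by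
      intro ε
      obtain ⟨l0, _, hl0⟩ := Finset.exists_mem_eq_sup' (H := ne) (fun l => Z l ε)
      have hWe : W ε = Z l0 ε := hl0
      rw [hWe]
      exact Finset.single_le_sum (f := fun l => exp (t * Z l ε))
        (fun l _ => (exp_pos _).le) (Finset.mem_univ l0)
    -- mcdiarmid per class
    have hmc : ∀ l : Fin M, ∑ ε : Fin m → Bool, exp (t * Z l ε)
        ≤ 2 ^ m * exp (t * ME + t ^ 2 * lam ^ 2 / (2 * m)) := by
      intro l
      refine (sum_exp_mcdiarmid m c t hc0 ht.le (Z l) (hbd l)).trans ?_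
      refine mul_le_mul_of_nonneg_left (Real.exp_le_exp.2 ?_) (by positivity)
      have h1 : (2 ^ m : ℝ)⁻¹ * ∑ ε : Fin m → Bool, Z l ε ≤ ME :=
        Finset.le_sup' (f := fun l : Fin M => (2 ^ m : ℝ)⁻¹ * ∑ ε : Fin m → Bool, Z l ε)
          (Finset.mem_univ l)
      have h2 : t ^ 2 * c ^ 2 * m / 8 = t ^ 2 * lam ^ 2 / (2 * m) := by
        rw [hc]; field_simp; ring
      rw [h2]
      have := mul_le_mul_of_nonneg_left h1 ht.le
      linarith
    -- combine
    have hfinal : exp (t * AW) ≤ M * exp (t * ME + t ^ 2 * lam ^ 2 / (2 * m)) := by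
      refine jensen.trans ?_
      have h1 : ∑ ε : Fin m → Bool, exp (t * W ε)
          ≤ ∑ ε : Fin m → Bool, ∑ l : Fin M, exp (t * Z l ε) :=
        Finset.sum_le_sum fun ε _ => hpt ε
      have h2 : ∑ ε : Fin m → Bool, ∑ l : Fin M, exp (t * Z l ε)
          = ∑ l : Fin M, ∑ ε : Fin m → Bool, exp (t * Z l ε) := Finset.sum_comm
      have h3 : ∑ l : Fin M, ∑ ε : Fin m → Bool, exp (t * Z l ε)
          ≤ ∑ _l : Fin M, 2 ^ m * exp (t * ME + t ^ 2 * lam ^ 2 / (2 * m)) :=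
        Finset.sum_le_sum fun l _ => hmc l
      have h4 : (∑ _l : Fin M, 2 ^ m * exp (t * ME + t ^ 2 * lam ^ 2 / (2 * m)) : ℝ)
          = M * (2 ^ m * exp (t * ME + t ^ 2 * lam ^ 2 / (2 * m))) := by
        rw [Finset.sum_const, Finset.card_univ, Fintype.card_fin, nsmul_eq_mul]
      calc (2 ^ m : ℝ)⁻¹ * ∑ ε : Fin m → Bool, exp (t * W ε)
          ≤ (2 ^ m : ℝ)⁻¹ * (M * (2 ^ m * exp (t * ME + t ^ 2 * lam ^ 2 / (2 * m)))) := by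
            refine mul_le_mul_of_nonneg_left ?_ (by positivity)
            rw [← h4]
            exact (h1.trans (le_of_eq h2)).trans h3
        _ = M * exp (t * ME + t ^ 2 * lam ^ 2 / (2 * m)) := by
            field_simp
            try ring
    -- take logs
    have hlog : t * AW ≤ Real.log M + (t * ME + t ^ 2 * lam ^ 2 / (2 * m)) := by
      have hpos : (0:ℝ) < M * exp (t * ME + t ^ 2 * lam ^ 2 / (2 * m)) := by positivity
      have := (Real.le_log_iff_exp_le hpos).2 hfinal
      rwa [Real.log_mul (ne_of_gt hM') (Real.exp_ne_zero _), Real.log_exp] at this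
    have heq : t * (ME + Real.log M / t + t * lam ^ 2 / (2 * m))
        = Real.log M + (t * ME + t ^ 2 * lam ^ 2 / (2 * m)) := by
      field_simp
      try ring
    exact (mul_le_mul_iff_right₀ ht).mp (by rw [heq]; exact hlog)
  -- optimize over t
  have hMr : (1:ℝ) ≤ M := by exact_mod_cast hM
  rcases eq_or_lt_of_le (Real.log_nonneg hMr) with hL | hL
  · -- M = 1 case : log M = 0
    have hs : lam * Real.sqrt (2 * Real.log M / m) = 0 := by
      rw [← hL]
      norm_num
    rw [hs, add_zero]
    refine le_of_forall_pos_le_add fun δ hδ => ?_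
    have hk := key (2 * m * δ / lam ^ 2) (by positivity)
    rw [← hL] at hk
    have e1 : (0:ℝ) / (2 * m * δ / lam ^ 2) = 0 := zero_div _
    have e2 : (2 * m * δ / lam ^ 2) * lam ^ 2 / (2 * m) = δ := by
      field_simp
    rw [e1, e2] at hk
    linarith
  · set L := Real.log M with hLdef
    have hLm : 0 < 2 * L / m := by positivity
    set s := Real.sqrt (2 * L / m) with hsdef
    have hs0 : 0 < s := Real.sqrt_pos.2 hLm
    have hs2 : s ^ 2 = 2 * L / m := Real.sq_sqrt hLm.le
    have hL' : L = s ^ 2 * m / 2 := by rw [hs2]; field_simp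
    set t : ℝ := s * m / lam with htdef
    have ht : 0 < t := by positivity
    refine (key t ht).trans ?_
    have heq : L / t + t * lam ^ 2 / (2 * m) = lam * s := by
      rw [htdef, hL']
      field_simp
      try ring
    linarith [heq]

/-- Finite-union maximal inequality for Rademacher averages: the expected
maximum over a finite union of function classes of the empirical Rademacher
average is bounded by the largest class-wise expectation plus `λ·√(2·log M/m)`. -/
theorem finite_union_rademacher_maximal {Ω 𝒳 : Type*} [MeasurableSpace Ω]
    (μ : Measure Ω) [IsProbabilityMeasure μ]
    (m : ℕ) (hm : 1 ≤ m)
    (σ : Fin m → Ω → ℝ)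
    (hσmeas : ∀ i, Measurable (σ i))
    (hσindep : iIndepFun σ μ)
    (hσunif : ∀ i, Measure.map (σ i) μ
      = (2⁻¹ : ENNReal) • Measure.dirac (1 : ℝ) + (2⁻¹ : ENNReal) • Measure.dirac (-1 : ℝ))
    (x : Fin m → 𝒳) (lam : ℝ) (hlam : 0 ≤ lam)
    (M : ℕ) (hM : 1 ≤ M)
    (F : Fin M → Finset (𝒳 → ℝ))
    (hFne : ∀ l, (F l).Nonempty)
    (hFb : ∀ l, ∀ h ∈ F l, ∀ i, |h (x i)| ≤ lam) :
    ∫ ω, (Finset.univ.sup' ⟨⟨0, hM⟩, Finset.mem_univ _⟩ fun l : Fin M =>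
        (F l).sup' (hFne l) fun h => (1 / (m : ℝ)) * ∑ i, σ i ω * h (x i)) ∂μ
    ≤ (Finset.univ.sup' ⟨⟨0, hM⟩, Finset.mem_univ _⟩ fun l : Fin M =>
        ∫ ω, (F l).sup' (hFne l) (fun h => (1 / (m : ℝ)) * ∑ i, σ i ω * h (x i)) ∂μ)
      + lam * Real.sqrt (2 * Real.log M / m) := by
  classical
  have hm' : (0:ℝ) < m := by exact_mod_cast hm
  set ne : (Finset.univ : Finset (Fin M)).Nonempty := ⟨⟨0, hM⟩, Finset.mem_univ _⟩ with hne
  rcases hlam.eq_or_lt with hl0 | hl0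
  · -- degenerate case lam = 0
    have hzero : ∀ l, ∀ h ∈ F l, ∀ i, h (x i) = 0 := by
      intro l h hh i
      have := hFb l h hh i
      rw [← hl0] at this
      exact abs_eq_zero.mp (le_antisymm this (abs_nonneg _))
    have hZ : ∀ (l : Fin M) (v : Fin m → ℝ),
        ((F l).sup' (hFne l) fun h => (1 / (m : ℝ)) * ∑ i, v i * h (x i)) = 0 := by
      intro l v
      have hall : ∀ h ∈ F l, (1 / (m : ℝ)) * ∑ i, v i * h (x i) = 0 := by
        intro h hh
        rw [Finset.sum_congr rfl fun i _ => by rw [hzero l h hh i, mul_zero]]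
        rw [Finset.sum_const_zero, mul_zero]
      apply le_antisymm
      · exact Finset.sup'_le _ _ fun h hh => le_of_eq (hall h hh)
      · obtain ⟨h, hh⟩ := hFne l
        rw [← hall h hh]
        exact Finset.le_sup' (f := fun h => (1 / (m : ℝ)) * ∑ i, v i * h (x i)) hh
    have hsupZ : ∀ v : Fin m → ℝ,
        (Finset.univ.sup' ne fun l : Fin M =>
          (F l).sup' (hFne l) fun h => (1 / (m : ℝ)) * ∑ i, v i * h (x i)) = 0 := by
      intro v
      apply le_antisymm
      · exact Finset.sup'_le _ _ fun l _ => le_of_eq (hZ l v)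
      · rw [← hZ ⟨0, hM⟩ v]
        exact Finset.le_sup' (f := fun l : Fin M =>
          (F l).sup' (hFne l) fun h => (1 / (m : ℝ)) * ∑ i, v i * h (x i))
          (Finset.mem_univ _)
    have hL : (fun ω => Finset.univ.sup' ne fun l : Fin M =>
        (F l).sup' (hFne l) fun h => (1 / (m : ℝ)) * ∑ i, σ i ω * h (x i)) = fun _ => (0:ℝ) :=
      funext fun ω => hsupZ (fun i => σ i ω)
    rw [hL, integral_zero]
    have hR : ∀ l : Fin M, ∫ ω, (F l).sup' (hFne l)
        (fun h => (1 / (m : ℝ)) * ∑ i, σ i ω * h (x i)) ∂μ = 0 := by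
      intro l
      have : (fun ω => (F l).sup' (hFne l)
          (fun h => (1 / (m : ℝ)) * ∑ i, σ i ω * h (x i))) = fun _ => (0:ℝ) :=
        funext fun ω => hZ l (fun i => σ i ω)
      rw [this, integral_zero]
    have hRs : (Finset.univ.sup' ne fun l : Fin M => ∫ ω, (F l).sup' (hFne l)
        (fun h => (1 / (m : ℝ)) * ∑ i, σ i ω * h (x i)) ∂μ) = 0 := by
      apply le_antisymm
      · exact Finset.sup'_le _ _ fun l _ => le_of_eq (hR l)
      · rw [← hR ⟨0, hM⟩]
        exact Finset.le_sup' (f := fun l : Fin M => ∫ ω, (F l).sup' (hFne l)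
          (fun h => (1 / (m : ℝ)) * ∑ i, σ i ω * h (x i)) ∂μ) (Finset.mem_univ _)
    rw [hRs, ← hl0]
    norm_num
  · -- main case 0 < lam
    set Z : Fin M → (Fin m → Bool) → ℝ := fun l ε => (F l).sup' (hFne l)
      fun h => (1 / (m : ℝ)) * ∑ i, (if ε i then (1:ℝ) else -1) * h (x i) with hZdef
    -- bounded differences
    have hbd : ∀ l ε i, |Z l ε - Z l (Function.update ε i (!ε i))| ≤ 2 * lam / m := by
      intro l ε i
      refine abs_sup'_sub_sup'_le _ _ _ _ _ fun h hh => ?_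
      set χ : Bool → ℝ := fun b => if b then 1 else -1 with hχ
      have hdiff : (1 / (m : ℝ)) * ∑ j, χ (ε j) * h (x j)
          - (1 / (m : ℝ)) * ∑ j, χ (Function.update ε i (!ε i) j) * h (x j)
          = (1 / (m : ℝ)) * ((χ (ε i) - χ (!ε i)) * h (x i)) := by
        rw [← mul_sub, ← Finset.sum_sub_distrib]
        congr 1
        rw [Finset.sum_eq_single i]
        · rw [Function.update_self, sub_mul]
        · intro j _ hj
          rw [Function.update_of_ne hj, sub_self]
        · intro hi
          exact absurd (Finset.mem_univ i) hi
      rw [hdiff, abs_mul, abs_mul]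
      have h1 : |χ (ε i) - χ (!ε i)| = 2 := by
        cases hb : ε i <;> simp [hχ] <;> norm_num
      rw [h1]
      have h2 : |h (x i)| ≤ lam := hFb l h hh i
      have h3 : |(1 / (m : ℝ))| = 1 / m := abs_of_pos (by positivity)
      have hinv : (0:ℝ) < (m:ℝ)⁻¹ := by positivity
      rw [h3, div_eq_mul_inv, div_eq_mul_inv, one_mul]
      nlinarith
    -- rewrite the integrals
    have L1 : ∫ ω, (Finset.univ.sup' ne fun l : Fin M =>
          (F l).sup' (hFne l) fun h => (1 / (m : ℝ)) * ∑ i, σ i ω * h (x i)) ∂μ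
        = (2 ^ m : ℝ)⁻¹ * ∑ ε : Fin m → Bool, Finset.univ.sup' ne fun l : Fin M => Z l ε :=
      integral_rademacher_eq_avg μ m σ hσmeas hσindep hσunif
        (fun v => Finset.univ.sup' ne fun l : Fin M =>
          (F l).sup' (hFne l) fun h => (1 / (m : ℝ)) * ∑ i, v i * h (x i))
    have L2 : ∀ l : Fin M, ∫ ω, (F l).sup' (hFne l)
          (fun h => (1 / (m : ℝ)) * ∑ i, σ i ω * h (x i)) ∂μ
        = (2 ^ m : ℝ)⁻¹ * ∑ ε : Fin m → Bool, Z l ε := fun l =>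
      integral_rademacher_eq_avg μ m σ hσmeas hσindep hσunif
        (fun v => (F l).sup' (hFne l) fun h => (1 / (m : ℝ)) * ∑ i, v i * h (x i))
    rw [L1]
    have hfun : (fun l : Fin M => ∫ ω, (F l).sup' (hFne l)
          (fun h => (1 / (m : ℝ)) * ∑ i, σ i ω * h (x i)) ∂μ)
        = fun l : Fin M => (2 ^ m : ℝ)⁻¹ * ∑ ε : Fin m → Bool, Z l ε :=
      funext fun l => L2 l
    rw [hfun]
    exact finite_maximal m M hm hM lam hl0 Z hbd
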